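/- Let A be an n-DPDA whose input alphabet contains a distinguished symbol ⋆, and let R be a run of A between two milestone configurations. If R reads only ⋆ symbols, then R is 0-upper. -/

import Mathlib

namespace HOPDA

/-- Iterated exponentiation `pow` from the paper:
`pow [] = 1`, `pow (m :: l) = (1 + m) ^ pow l - 1`. -/
def pow : List ℕ → ℕ
  | [] => 1
  | m :: l => (1 + m) ^ pow l - 1

/-! ### Higher-order stacks.

Stacks are represented positionlessly (nested lists of symbols); the positions of the
paper are represented by *addresses*: lists of bottom-based indices leading from the
outermost level into the stack.  Equality of contents is positionless equality `≅`. -/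

inductive St (Γ : Type) : Type where
  | leaf (γ : Γ) : St Γ
  | node (l : List (St Γ)) : St Γ

/-- `IsValid k s` : `s` is a stack of order `k` all of whose component stacks are nonempty. -/
def IsValid {Γ : Type} : ℕ → St Γ → Prop
  | 0, St.leaf _ => True
  | 0, St.node _ => False
  | _ + 1, St.leaf _ => False
  | k + 1, St.node l => l ≠ [] ∧ ∀ t ∈ l, IsValid k t

/-- The address of the topmost substack `d` levels below the surface
(indices count from the bottom of each stack, as the positions in the paper do). -/
def topAddr {Γ : Type} : St Γ → ℕ → List ℕ
  | _, 0 => []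
  | St.leaf _, _ + 1 => []
  | St.node l, d + 1 => (l.length - 1) :: topAddr (l.getLastD (St.node [])) d

/-- The substack sitting at a given address. -/
def sub? {Γ : Type} : St Γ → List ℕ → Option (St Γ)
  | s, [] => some s
  | St.leaf _, _ :: _ => none
  | St.node l, i :: p =>
      match l[i]? with
      | some t => sub? t p
      | none => none

/-- Modify the substack at a given address. -/
def modAt {Γ : Type} : St Γ → List ℕ → (St Γ → Option (St Γ)) → Option (St Γ)
  | s, [], f => f s
  | St.leaf _, _ :: _, _ => none
  | St.node l, i :: p, f =>
      match l[i]? with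
      | none => none
      | some t =>
          match modAt t p f with
          | none => none
          | some t' => some (St.node (l.set i t'))

/-- The topmost stack symbol of an order-`n` stack. -/
def topLeaf? {Γ : Type} (n : ℕ) (s : St Γ) : Option Γ :=
  match sub? s (topAddr s n) with
  | some (St.leaf γ) => some γ
  | _ => none

/-- The content of the topmost `k`-stack of an order-`n` stack (`top^k`);
equality of these contents is positionless equality `≅` of topmost `k`-stacks. -/
def topStk {Γ : Type} (n : ℕ) (s : St Γ) (k : ℕ) : Option (St Γ) :=
  sub? s (topAddr s (n - k))

/-- Number of components of the (composite) stack at the given address. -/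
def sizeAt {Γ : Type} (s : St Γ) (p : List ℕ) : ℕ :=
  match sub? s p with
  | some (St.node l) => l.length
  | _ => 0

/-- Remove the topmost component of a composite stack
(defined only when it has at least two components). -/
def popStk {Γ : Type} : St Γ → Option (St Γ)
  | St.node l => if 2 ≤ l.length then some (St.node l.dropLast) else none
  | St.leaf _ => none

/-- Duplicate the topmost `(r-1)`-stack of an `r`-stack,
replacing the topmost symbol of the new copy by `γ`. -/
def dupTop {Γ : Type} (r : ℕ) (γ : Γ) : St Γ → Option (St Γ)
  | St.node l =>
      match l.getLast? with
      | none => none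
      | some t =>
          match modAt t (topAddr t (r - 1)) (fun u =>
            match u with
            | St.leaf _ => some (St.leaf γ)
            | St.node _ => none) with
          | none => none
          | some t' => some (St.node (l ++ [t']))
  | St.leaf _ => none

/-- `push^r_γ` on an order-`n` stack. -/
def pushOp {Γ : Type} (n r : ℕ) (γ : Γ) (s : St Γ) : Option (St Γ) :=
  modAt s (topAddr s (n - r)) (dupTop r γ)

/-- `pop^r` on an order-`n` stack. -/
def popOp {Γ : Type} (n r : ℕ) (s : St Γ) : Option (St Γ) :=
  modAt s (topAddr s (n - r)) popStk

/-- Stack operations of an order-`n` pushdown automaton. -/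
inductive Op (Γ : Type) where
  | pop (k : ℕ)
  | push (k : ℕ) (γ : Γ)

def applyOp {Γ : Type} (n : ℕ) : Op Γ → St Γ → Option (St Γ)
  | Op.pop k, s => if 1 ≤ k ∧ k ≤ n then popOp n k s else none
  | Op.push k γ, s => if 1 ≤ k ∧ k ≤ n then pushOp n k γ s else none

/-- The one-step history function on addresses: for the address of a substack of
`op(s)` it returns the address of the substack of `s` from which it originates. -/
def histStep {Γ : Type} (n : ℕ) : Op Γ → St Γ → List ℕ → List ℕ
  | Op.pop _, _, p => p
  | Op.push r _, s, p =>
      let m := n - r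
      let ta := topAddr s m
      let sz := sizeAt s ta
      if p.take (m + 1) = ta ++ [sz] then p.set m (sz - 1) else p

/-! ### Deterministic order-`n` pushdown automata -/

inductive Trans (A Γ Q : Type) where
  | read (f : A → Q)
  | op (q : Q) (o : Op Γ)

/-- A deterministic order-`n` pushdown automaton. -/
structure DPDA (n : ℕ) (A Γ : Type) where
  Q : Type
  finQ : Finite Q
  qI : Q
  γI : Γ
  F : Set Q
  δ : Q → Γ → Trans A Γ Q
  read_inj : ∀ q γ f, δ q γ = Trans.read f → Function.Injective f

/-- One step of an `n`-DPDA; the label records the letter read (if any). -/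
inductive Step {n : ℕ} {A Γ : Type} (D : DPDA n A Γ) :
    D.Q × St Γ → Option A → D.Q × St Γ → Prop where
  | read {q : D.Q} {s : St Γ} {γ : Γ} {f : A → D.Q} (a : A) :
      IsValid n s → topLeaf? n s = some γ → D.δ q γ = Trans.read f →
      Step D (q, s) (some a) (f a, s)
  | op {q : D.Q} {s s' : St Γ} {γ : Γ} {q' : D.Q} {o : Op Γ} :
      IsValid n s → topLeaf? n s = some γ → D.δ q γ = Trans.op q' o →
      applyOp n o s = some s' →
      Step D (q, s) none (q', s')

/-- A (finite) run `R(0), …, R(len)` of an `n`-DPDA. -/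
structure Run {n : ℕ} {A Γ : Type} (D : DPDA n A Γ) where
  len : ℕ
  cfg : ℕ → D.Q × St Γ
  lab : ℕ → Option A
  ok : ∀ i < len, Step D (cfg i) (lab i) (cfg (i + 1))

namespace Run

variable {n : ℕ} {A Γ : Type} {D : DPDA n A Γ}

/-- The word read by a run. -/
def word (R : Run D) : List A := (List.range R.len).filterMap R.lab

/-- The subrun `R[i,j]`. -/
def sub (R : Run D) (i j : ℕ) : Run D where
  len := min j R.len - i
  cfg := fun t => R.cfg (i + t)
  lab := fun t => R.lab (i + t)
  ok := fun t ht => R.ok (i + t) (by omega)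

/-- The history function of the single step starting at position `j` of the run. -/
def stepHist (R : Run D) (j : ℕ) : List ℕ → List ℕ :=
  match topLeaf? n (R.cfg j).2 with
  | none => id
  | some γ =>
      match D.δ (R.cfg j).1 γ with
      | Trans.read _ => id
      | Trans.op _ o => histStep n o (R.cfg j).2

/-- `histTo R i j p` : the address in `R(i)` of the origin (history) of the substack
of `R(j)` sitting at address `p` (meaningful for `i ≤ j ≤ R.len`). -/
def histTo (R : Run D) (i : ℕ) : ℕ → List ℕ → List ℕ
  | 0, p => p
  | j + 1, p => if j + 1 ≤ i then p else histTo R i j (stepHist R j p)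

/-- A run is `k`-upper when the topmost `k`-stack at its end originates from
the topmost `k`-stack at its start. -/
def IsUpper (R : Run D) (k : ℕ) : Prop :=
  histTo R 0 R.len (topAddr (R.cfg R.len).2 (n - k)) = topAddr (R.cfg 0).2 (n - k)

/-- A run is a `k`-return when the topmost `(k-1)`-stack at its end originates from the
topmost `(k-1)`-stack of `pop^k` of its starting stack, and no suffix is `(k-1)`-upper. -/
def IsReturn (R : Run D) (k : ℕ) : Prop :=
  (histTo R 0 R.len (topAddr (R.cfg R.len).2 (n - (k - 1))) =
    topAddr (R.cfg 0).2 (n - k) ++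
      [sizeAt (R.cfg 0).2 (topAddr (R.cfg 0).2 (n - k)) - 2]) ∧
  ∀ i < R.len, ¬ (R.sub i R.len).IsUpper (k - 1)

end Run

/-- `R` is the composition `S ∘ T` of the runs `S` and `T`. -/
def IsComp {n : ℕ} {A Γ : Type} {D : DPDA n A Γ} (R S T : Run D) : Prop :=
  S.cfg S.len = T.cfg 0 ∧ R.len = S.len + T.len ∧
  (∀ i ≤ S.len, R.cfg i = S.cfg i) ∧ (∀ i < S.len, R.lab i = S.lab i) ∧
  (∀ i ≤ T.len, R.cfg (S.len + i) = T.cfg i) ∧ (∀ i < T.len, R.lab (S.len + i) = T.lab i)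

/-- `Decomp R k r c` : `c 0 < c 1 < … < c r` are the cut points of the (unique)
decomposition of the `k`-upper run `R` into the maximal number of nonempty
`k`-upper runs. -/
def Decomp {n : ℕ} {A Γ : Type} {D : DPDA n A Γ} (R : Run D) (k r : ℕ) (c : ℕ → ℕ) : Prop :=
  c 0 = 0 ∧ c r = R.len ∧ (∀ j < r, c j < c (j + 1)) ∧ (∀ j ≤ r, c j ≤ R.len) ∧
  (∀ j < r, (R.sub (c j) (c (j + 1))).IsUpper k) ∧
  (∀ j < r, ∀ i, c j < i → i < c (j + 1) → ¬ (R.sub i (c (j + 1))).IsUpper k)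

/-- The image under the morphism generated by `φ` of a word. -/
def phiW {A M : Type} [Monoid M] (φ : A → M) (w : List A) : M := (w.map φ).prod

/-- The two `k`-upper runs `R` and `S` are `(k,φ)`-parallel. -/
def Parallel {n : ℕ} {A Γ M : Type} [Monoid M] {D : DPDA n A Γ}
    (φ : A → M) (R S : Run D) (k : ℕ) : Prop :=
  R.IsUpper k ∧ S.IsUpper k ∧
  topStk n (R.cfg R.len).2 k = topStk n (S.cfg S.len).2 k ∧
  ∃ (r : ℕ) (cR cS : ℕ → ℕ), Decomp R k r cR ∧ Decomp S k r cS ∧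
    ∀ j < r,
      phiW φ (R.sub (cR j) (cR (j + 1))).word = phiW φ (S.sub (cS j) (cS (j + 1))).word ∧
      topStk n (R.cfg (cR j)).2 k = topStk n (S.cfg (cS j)).2 k

/-- An infinite run of an `n`-DPDA. -/
structure InfRun {n : ℕ} {A Γ : Type} (D : DPDA n A Γ) where
  cfg : ℕ → D.Q × St Γ
  lab : ℕ → Option A
  ok : ∀ i, Step D (cfg i) (lab i) (cfg (i + 1))

/-- The finite subrun `R[i,j]` of an infinite run. -/
def InfRun.sub {n : ℕ} {A Γ : Type} {D : DPDA n A Γ} (R : InfRun D) (i j : ℕ) : Run D where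
  len := j - i
  cfg := fun t => R.cfg (i + t)
  lab := fun t => R.lab (i + t)
  ok := fun t _ => R.ok (i + t)

/-- A step label reads nothing, or reads the `star` symbol. -/
def OnlyStar {A : Type} (star : A) (o : Option A) : Prop := o = none ∨ o = some star

/-- Milestone configurations. -/
def Milestone {n : ℕ} {A Γ : Type} {D : DPDA n A Γ} (star : A) (c : D.Q × St Γ) : Prop :=
  ∃ R : InfRun D, R.cfg 0 = c ∧ (∀ i, OnlyStar star (R.lab i)) ∧
    ∃ I : Set ℕ, I.Infinite ∧ 0 ∈ I ∧ ∀ i ∈ I, ∀ j ∈ I, i ≤ j → (R.sub i j).IsUpper 0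

/-- The initial order-`n` stack, containing the single symbol `γ`. -/
def initStack (n : ℕ) {Γ : Type} (γ : Γ) : St Γ :=
  Nat.rec (motive := fun _ => St Γ) (St.leaf γ) (fun _ s => St.node [s]) n

def initCfg {n : ℕ} {A Γ : Type} (D : DPDA n A Γ) : D.Q × St Γ := (D.qI, initStack n D.γI)

/-- The language recognized by an `n`-DPDA. -/
def Lang {n : ℕ} {A Γ : Type} (D : DPDA n A Γ) : Set (List A) :=
  { w | ∃ R : Run D, R.cfg 0 = initCfg D ∧ R.word = w ∧ (R.cfg R.len).1 ∈ D.F }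

/-! ### Deterministic order-2 collapsible pushdown automata -/

/-- Stack operations of an order-2 collapsible pushdown automaton. -/
inductive COp (Γ : Type) where
  | pop1
  | pop2
  | push1 (γ : Γ)
  | push2 (γ : Γ)
  | collapse

/-- An order-2 collapsible stack: a list of 1-stacks (topmost first), each a list of
0-stacks (topmost first) storing a symbol and the collapse link (a natural number). -/
abbrev CStk (Γ : Type) := List (List (Γ × ℕ))

/-- Semantics of the order-2 collapsible stack operations. -/
def capply {Γ : Type} : COp Γ → CStk Γ → Option (CStk Γ)
  | COp.pop1, (_ :: x :: t) :: rest => some ((x :: t) :: rest)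
  | COp.pop1, _ => none
  | COp.pop2, _ :: s :: rest => some (s :: rest)
  | COp.pop2, _ => none
  | COp.push1 γ, (x :: t) :: rest => some (((γ, rest.length + 1) :: x :: t) :: rest)
  | COp.push1 _, _ => none
  | COp.push2 γ, ((x, m) :: t) :: rest => some (((γ, m) :: t) :: ((x, m) :: t) :: rest)
  | COp.push2 _, _ => none
  | COp.collapse, ((x, m) :: t) :: rest =>
      if 1 ≤ m - 1 ∧ m - 1 ≤ rest.length + 1 then
        some ((((x, m) :: t) :: rest).drop (rest.length + 1 - (m - 1)))
      else none
  | COp.collapse, _ => none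

/-- The topmost stack symbol of an order-2 collapsible stack. -/
def ctop? {Γ : Type} : CStk Γ → Option Γ
  | ((γ, _) :: _) :: _ => some γ
  | _ => none

inductive CTrans (A Γ Q : Type) where
  | read (f : A → Q)
  | op (q : Q) (o : COp Γ)

/-- A deterministic order-2 collapsible pushdown automaton. -/
structure CPDA2 (A Γ : Type) where
  Q : Type
  finQ : Finite Q
  qI : Q
  γI : Γ
  F : Set Q
  δ : Q → Γ → CTrans A Γ Q
  read_inj : ∀ q γ f, δ q γ = CTrans.read f → Function.Injective f

inductive CStep {A Γ : Type} (D : CPDA2 A Γ) :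
    D.Q × CStk Γ → Option A → D.Q × CStk Γ → Prop where
  | read {q : D.Q} {s : CStk Γ} {γ : Γ} {f : A → D.Q} (a : A) :
      ctop? s = some γ → D.δ q γ = CTrans.read f → CStep D (q, s) (some a) (f a, s)
  | op {q : D.Q} {s s' : CStk Γ} {γ : Γ} {q' : D.Q} {o : COp Γ} :
      ctop? s = some γ → D.δ q γ = CTrans.op q' o → capply o s = some s' →
      CStep D (q, s) none (q', s')

structure CRun {A Γ : Type} (D : CPDA2 A Γ) where
  len : ℕ
  cfg : ℕ → D.Q × CStk Γ
  lab : ℕ → Option A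
  ok : ∀ i < len, CStep D (cfg i) (lab i) (cfg (i + 1))

def CRun.word {A Γ : Type} {D : CPDA2 A Γ} (R : CRun D) : List A :=
  (List.range R.len).filterMap R.lab

def cinitCfg {A Γ : Type} (D : CPDA2 A Γ) : D.Q × CStk Γ := (D.qI, [[(D.γI, 1)]])

/-- The language recognized by a 2-DCPDA. -/
def CLang {A Γ : Type} (D : CPDA2 A Γ) : Set (List A) :=
  { w | ∃ R : CRun D, R.cfg 0 = cinitCfg D ∧ R.word = w ∧ (R.cfg R.len).1 ∈ D.F }

/-! ### The alphabet `{[, ], ⋆, ♯}`, the function `stars`, and the language `U` -/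

inductive Alph : Type where
  | lb    -- the opening bracket [
  | rb    -- the closing bracket ]
  | star  -- ⋆
  | sharp -- ♯
  deriving DecidableEq

instance : Fintype Alph where
  elems := {Alph.lb, Alph.rb, Alph.star, Alph.sharp}
  complete := by intro x; cases x <;> simp

/-- Processes a word over `{[, ], ⋆}`, keeping the total number of stars read so far and,
for each currently unmatched opening bracket (most recent first), the number of stars
read before it; returns `none` iff some prefix has more `]` than `[`. -/
def starsAux : List Alph → ℕ → List ℕ → Option (List ℕ)
  | [], _, st => some st
  | Alph.star :: w, cnt, st => starsAux w (cnt + 1) st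
  | Alph.lb :: w, cnt, st => starsAux w cnt (cnt :: st)
  | Alph.rb :: w, cnt, st =>
      match st with
      | [] => none
      | _ :: st' => starsAux w cnt st'
  | Alph.sharp :: _, _, _ => none

/-- `stars w` : `0` if some prefix of `w` has more closing than opening brackets, or if
`w` has equally many opening and closing brackets; otherwise the number of `⋆`s in `w`
before the last opening bracket of `w` not matched by a closing bracket. -/
def stars (w : List Alph) : ℕ :=
  match starsAux w 0 [] with
  | some (c :: _) => c
  | _ => 0

/-- The language `U = { w ♯^(stars(w)+1) | w ∈ {[, ], ⋆}* }`. -/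
def U : Set (List Alph) :=
  { u | ∃ w : List Alph, Alph.sharp ∉ w ∧ u = w ++ List.replicate (stars w + 1) Alph.sharp }

/-! ### Tree-generating pushdown systems -/

inductive TTrans (A Γ Q : Type) where
  | branch (a : A) (next : ℕ → Q)
  | op (q : Q) (o : Op Γ)

/-- A deterministic tree-generating order-`n` pushdown system (without collapse)
over the ranked alphabet `(A, rank)`. -/
structure TreePDA (n : ℕ) (A Γ : Type) (rank : A → ℕ) where
  Q : Type
  finQ : Finite Q
  qI : Q
  γI : Γ
  δ : Q → Γ → TTrans A Γ Q
  branch_inj : ∀ q γ a next, δ q γ = TTrans.branch a next →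
      ∀ i j, i < rank a → j < rank a → next i = next j → i = j

/-- One step of a tree-generating `n`-PDS; the label records the child chosen
at a branch step (if any). -/
inductive TStep {n : ℕ} {A Γ : Type} {rank : A → ℕ} (D : TreePDA n A Γ rank) :
    D.Q × St Γ → Option ℕ → D.Q × St Γ → Prop where
  | branch {q : D.Q} {s : St Γ} {γ : Γ} {a : A} {next : ℕ → D.Q} {i : ℕ} :
      IsValid n s → topLeaf? n s = some γ → D.δ q γ = TTrans.branch a next → i < rank a →
      TStep D (q, s) (some i) (next i, s)
  | op {q : D.Q} {s s' : St Γ} {γ : Γ} {q' : D.Q} {o : Op Γ} :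
      IsValid n s → topLeaf? n s = some γ → D.δ q γ = TTrans.op q' o →
      applyOp n o s = some s' →
      TStep D (q, s) none (q', s')

def TReach {n : ℕ} {A Γ : Type} {rank : A → ℕ} (D : TreePDA n A Γ rank) :
    D.Q × St Γ → D.Q × St Γ → Prop :=
  Relation.ReflTransGen (fun c c' => ∃ o, TStep D c o c')

def TOpReach {n : ℕ} {A Γ : Type} {rank : A → ℕ} (D : TreePDA n A Γ rank) :
    D.Q × St Γ → D.Q × St Γ → Prop :=
  Relation.ReflTransGen (fun c c' => TStep D c none c')

/-- `c` is a configuration at which a `branch(a,…)` transition applies. -/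
def TIsBr {n : ℕ} {A Γ : Type} {rank : A → ℕ} (D : TreePDA n A Γ rank)
    (c : D.Q × St Γ) (a : A) : Prop :=
  ∃ γ next, IsValid n c.2 ∧ topLeaf? n c.2 = some γ ∧ D.δ c.1 γ = TTrans.branch a next

/-- `TFollow D c p c'` : starting from the branch configuration `c` and following
the child choices `p` (each branch step being followed by op steps up to the next
branch configuration) one arrives at the branch configuration `c'`. -/
inductive TFollow {n : ℕ} {A Γ : Type} {rank : A → ℕ} (D : TreePDA n A Γ rank) :
    D.Q × St Γ → List ℕ → D.Q × St Γ → Prop where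
  | nil (c : D.Q × St Γ) : TFollow D c [] c
  | cons {c c₁ c₂ c₃ : D.Q × St Γ} {i : ℕ} {p : List ℕ} :
      TStep D c (some i) c₁ → TOpReach D c₁ c₂ → (∃ a, TIsBr D c₂ a) →
      TFollow D c₂ p c₃ → TFollow D c (i :: p) c₃

def tinitCfg {n : ℕ} {A Γ : Type} {rank : A → ℕ} (D : TreePDA n A Γ rank) : D.Q × St Γ :=
  (D.qI, initStack n D.γI)

/-- `D` generates the ranked tree whose labelling function is `t`
(`t p = some a` iff the node at position `p` exists and is labelled `a`). -/
def TGenerates {n : ℕ} {A Γ : Type} {rank : A → ℕ} (D : TreePDA n A Γ rank)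
    (t : List ℕ → Option A) : Prop :=
  (∀ c, TReach D (tinitCfg D) c → ∃ c' a, TReach D c c' ∧ TIsBr D c' a) ∧
  ∃ c₀, TOpReach D (tinitCfg D) c₀ ∧ (∃ a, TIsBr D c₀ a) ∧
    ∀ p a, t p = some a ↔ ∃ c, TFollow D c₀ p c ∧ TIsBr D c a

/-! ### Tree-generating order-2 collapsible pushdown systems -/

inductive CTTrans (A Γ Q : Type) where
  | branch (a : A) (next : ℕ → Q)
  | op (q : Q) (o : COp Γ)

structure CTreePDA (A Γ : Type) (rank : A → ℕ) where
  Q : Type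
  finQ : Finite Q
  qI : Q
  γI : Γ
  δ : Q → Γ → CTTrans A Γ Q
  branch_inj : ∀ q γ a next, δ q γ = CTTrans.branch a next →
      ∀ i j, i < rank a → j < rank a → next i = next j → i = j

inductive CTStep {A Γ : Type} {rank : A → ℕ} (D : CTreePDA A Γ rank) :
    D.Q × CStk Γ → Option ℕ → D.Q × CStk Γ → Prop where
  | branch {q : D.Q} {s : CStk Γ} {γ : Γ} {a : A} {next : ℕ → D.Q} {i : ℕ} :
      ctop? s = some γ → D.δ q γ = CTTrans.branch a next → i < rank a →
      CTStep D (q, s) (some i) (next i, s)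
  | op {q : D.Q} {s s' : CStk Γ} {γ : Γ} {q' : D.Q} {o : COp Γ} :
      ctop? s = some γ → D.δ q γ = CTTrans.op q' o → capply o s = some s' →
      CTStep D (q, s) none (q', s')

def CTReach {A Γ : Type} {rank : A → ℕ} (D : CTreePDA A Γ rank) :
    D.Q × CStk Γ → D.Q × CStk Γ → Prop :=
  Relation.ReflTransGen (fun c c' => ∃ o, CTStep D c o c')

def CTOpReach {A Γ : Type} {rank : A → ℕ} (D : CTreePDA A Γ rank) :
    D.Q × CStk Γ → D.Q × CStk Γ → Prop :=
  Relation.ReflTransGen (fun c c' => CTStep D c none c')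

def CTIsBr {A Γ : Type} {rank : A → ℕ} (D : CTreePDA A Γ rank)
    (c : D.Q × CStk Γ) (a : A) : Prop :=
  ∃ γ next, ctop? c.2 = some γ ∧ D.δ c.1 γ = CTTrans.branch a next

inductive CTFollow {A Γ : Type} {rank : A → ℕ} (D : CTreePDA A Γ rank) :
    D.Q × CStk Γ → List ℕ → D.Q × CStk Γ → Prop where
  | nil (c : D.Q × CStk Γ) : CTFollow D c [] c
  | cons {c c₁ c₂ c₃ : D.Q × CStk Γ} {i : ℕ} {p : List ℕ} :
      CTStep D c (some i) c₁ → CTOpReach D c₁ c₂ → (∃ a, CTIsBr D c₂ a) →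
      CTFollow D c₂ p c₃ → CTFollow D c (i :: p) c₃

def ctinitCfg {A Γ : Type} {rank : A → ℕ} (D : CTreePDA A Γ rank) : D.Q × CStk Γ :=
  (D.qI, [[(D.γI, 1)]])

/-- The order-2 collapsible pushdown system `D` generates the ranked tree whose
labelling function is `t`. -/
def CTGenerates {A Γ : Type} {rank : A → ℕ} (D : CTreePDA A Γ rank)
    (t : List ℕ → Option A) : Prop :=
  (∀ c, CTReach D (ctinitCfg D) c → ∃ c' a, CTReach D c c' ∧ CTIsBr D c' a) ∧
  ∃ c₀, CTOpReach D (ctinitCfg D) c₀ ∧ (∃ a, CTIsBr D c₀ a) ∧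
    ∀ p a, t p = some a ↔ ∃ c, CTFollow D c₀ p c ∧ CTIsBr D c a

/-! ### Auxiliary: first difference of two lists, and the induced order -/

def fd : List ℕ → List ℕ → ℕ
  | a :: p, b :: q => if a = b then fd p q + 1 else 0
  | _, _ => 0

lemma fd_comm : ∀ (p q : List ℕ), fd p q = fd q p
  | [], [] => rfl
  | [], _ :: _ => rfl
  | _ :: _, [] => rfl
  | a :: p, b :: q => by
      by_cases h : a = b
      · subst h; simp [fd, fd_comm p q]
      · simp [fd, h, Ne.symm h]

lemma fd_get_ne : ∀ {p q : List ℕ}, p ≠ q → p[fd p q]? ≠ q[fd p q]?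
  | [], [], h => absurd rfl h
  | [], b :: q, _ => by simp [fd]
  | a :: p, [], _ => by simp [fd]
  | a :: p, b :: q, h => by
      by_cases hab : a = b
      · subst hab
        have hpq : p ≠ q := fun hh => h (by rw [hh])
        simpa [fd] using fd_get_ne hpq
      · simp [fd, hab]

lemma fd_get_eq : ∀ {p q : List ℕ} {j : ℕ}, j < fd p q → p[j]? = q[j]?
  | a :: p, b :: q, j, hj => by
      by_cases hab : a = b
      · subst hab
        cases j with
        | zero => simp
        | succ j =>
            have hf : fd (a :: p) (a :: q) = fd p q + 1 := by simp [fd]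
            rw [hf] at hj
            simpa using fd_get_eq (Nat.lt_of_succ_lt_succ hj)
      · simp [fd, hab] at hj
  | [], [], j, hj => by simp [fd] at hj
  | [], _ :: _, j, hj => by simp [fd] at hj
  | _ :: _, [], j, hj => by simp [fd] at hj

lemma fd_eq_of {p q : List ℕ} {e : ℕ} (h : ∀ j < e, p[j]? = q[j]?)
    (hne : p[e]? ≠ q[e]?) : fd p q = e := by
  have hpq : p ≠ q := by rintro rfl; exact hne rfl
  rcases lt_trichotomy (fd p q) e with hlt | heq | hgt
  · exact absurd (h _ hlt) (fd_get_ne hpq)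
  · exact heq
  · exact absurd (fd_get_eq hgt) hne

lemma fd_lt_len {p q : List ℕ} (h : p ≠ q) (hl : p.length = q.length) :
    fd p q < p.length := by
  by_contra hc
  push_neg at hc
  exact fd_get_ne h (by rw [List.getElem?_eq_none hc, List.getElem?_eq_none (by omega)])

/-- `p` is smaller than `q` at the first position where they differ. -/
def ltd (p q : List ℕ) : Prop :=
  ∃ a b, p[fd p q]? = some a ∧ q[fd p q]? = some b ∧ a < b

lemma ltd_or {p q : List ℕ} (h : p ≠ q) (hl : p.length = q.length) :
    ltd p q ∨ ltd q p := by
  have h1 := fd_lt_len h hl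
  have h2 : fd p q < q.length := by omega
  obtain ⟨a, ha⟩ : ∃ a, p[fd p q]? = some a := ⟨_, List.getElem?_eq_getElem h1⟩
  obtain ⟨b, hb⟩ : ∃ b, q[fd p q]? = some b := ⟨_, List.getElem?_eq_getElem h2⟩
  have hab : a ≠ b := by
    intro hh; subst hh; exact fd_get_ne h (ha.trans hb.symm)
  rcases lt_or_gt_of_ne hab with hh | hh
  · exact Or.inl ⟨a, b, ha, hb, hh⟩
  · exact Or.inr ⟨b, a, by rw [fd_comm]; exact hb, by rw [fd_comm]; exact ha, hh⟩

lemma ltd_asymm {p q : List ℕ} (h1 : ltd p q) (h2 : ltd q p) : False := by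
  obtain ⟨a, b, ha, hb, hab⟩ := h1
  obtain ⟨b', a', hb', ha', hba⟩ := h2
  rw [fd_comm] at hb' ha'
  cases ha.symm.trans ha'
  cases hb.symm.trans hb'
  omega
/-! ### Auxiliary stack lemmas -/

section Stacks
variable {Γ : Type}

/-- `p` is the address of a leaf (a `0`-stack) of `s`. -/
def LeafAt (s : St Γ) (p : List ℕ) : Prop := ∃ γ, sub? s p = some (St.leaf γ)

lemma getLast_facts {l : List (St Γ)} (h : l ≠ []) (d : St Γ) :
    l[l.length - 1]? = some (l.getLastD d) ∧ l.getLastD d ∈ l := by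
  have hlen : l.length - 1 < l.length := by
    have := List.length_pos_iff.mpr h; omega
  rw [List.getLastD_eq_getLast?, List.getLast?_eq_getElem?, List.getElem?_eq_getElem hlen]
  exact ⟨rfl, List.getElem_mem _⟩

lemma ltd_cons_same {i : ℕ} {p q : List ℕ} (h : ltd p q) : ltd (i :: p) (i :: q) := by
  obtain ⟨a, b, ha, hb, hab⟩ := h
  exact ⟨a, b, by simp [fd, ha], by simp [fd, hb], hab⟩

lemma ltd_cons_lt {i j : ℕ} {p q : List ℕ} (h : i < j) : ltd (i :: p) (j :: q) :=
  ⟨i, j, by simp [fd, Nat.ne_of_lt h], by simp [fd, Nat.ne_of_lt h], h⟩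

lemma leafAt_len : ∀ {n : ℕ} {s : St Γ} {p : List ℕ},
    IsValid n s → LeafAt s p → p.length = n
  | 0, St.leaf _, [], _, _ => rfl
  | 0, St.leaf _, _ :: _, _, ⟨δ, hδ⟩ => by simp [sub?] at hδ
  | 0, St.node _, _, hv, _ => by simp [IsValid] at hv
  | _ + 1, St.leaf _, _, hv, _ => by simp [IsValid] at hv
  | _ + 1, St.node _, [], _, ⟨δ, hδ⟩ => by simp [sub?] at hδ
  | n + 1, St.node l, i :: q, hv, ⟨δ, hδ⟩ => by
      simp only [sub?] at hδ
      cases hli : l[i]? with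
      | none => rw [hli] at hδ; simp at hδ
      | some t =>
          rw [hli] at hδ
          have hm : t ∈ l := by
            obtain ⟨h1, h2⟩ := List.getElem?_eq_some_iff.mp hli
            exact h2 ▸ List.getElem_mem h1
          have := leafAt_len (hv.2 t hm) ⟨δ, hδ⟩
          simp [this]

lemma topAddr_len : ∀ {n d : ℕ} {s : St Γ}, IsValid n s → d ≤ n → (topAddr s d).length = d
  | _, 0, s, _, _ => by cases s <;> rfl
  | 0, _ + 1, _, _, hd => by omega
  | _ + 1, _ + 1, St.leaf _, hv, _ => by simp [IsValid] at hv
  | n + 1, d + 1, St.node l, hv, hd => by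
      obtain ⟨hget, hmem⟩ := getLast_facts hv.1 (St.node [])
      have hvt : IsValid n (l.getLastD (St.node [])) := hv.2 _ hmem
      simp [topAddr, topAddr_len hvt (by omega : d ≤ n), -List.getLastD_eq_getLast?]

lemma topChain : ∀ {n d : ℕ} {s : St Γ}, IsValid n s → d ≤ n →
    ∃ u, sub? s (topAddr s d) = some u ∧ IsValid (n - d) u
  | n, 0, s, hv, _ => ⟨s, by cases s <;> simp [sub?, topAddr], by simpa⟩
  | 0, _ + 1, _, _, hd => by omega
  | _ + 1, _ + 1, St.leaf _, hv, _ => by simp [IsValid] at hv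
  | n + 1, d + 1, St.node l, hv, hd => by
      obtain ⟨hget, hmem⟩ := getLast_facts hv.1 (St.node [])
      obtain ⟨u, hu, hvu⟩ := topChain (hv.2 _ hmem) (show d ≤ n by omega)
      exact ⟨u, by simp [topAddr, sub?, hget, hu, -List.getLastD_eq_getLast?], by simpa using hvu⟩

lemma topValid {n : ℕ} {s : St Γ} (hv : IsValid n s) : LeafAt s (topAddr s n) := by
  obtain ⟨u, hu, hvu⟩ := topChain hv le_rfl
  simp only [Nat.sub_self] at hvu
  cases u with
  | leaf γ => exact ⟨γ, hu⟩
  | node l => simp [IsValid] at hvu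

lemma topMax : ∀ {n : ℕ} {s : St Γ} {p : List ℕ}, IsValid n s → LeafAt s p →
    p ≠ topAddr s n → ltd p (topAddr s n)
  | 0, St.leaf _, p, _, ⟨δ, hδ⟩, hne => by
      cases p with
      | nil => exact absurd rfl hne
      | cons i q => simp [sub?] at hδ
  | 0, St.node _, _, hv, _, _ => by simp [IsValid] at hv
  | _ + 1, St.leaf _, _, hv, _, _ => by simp [IsValid] at hv
  | n + 1, St.node l, p, hv, ⟨δ, hδ⟩, hne => by
      cases p with
      | nil => simp [sub?] at hδ
      | cons i q =>
          simp only [sub?] at hδ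
          cases hli : l[i]? with
          | none => rw [hli] at hδ; simp at hδ
          | some t =>
              rw [hli] at hδ
              have hil : i < l.length := (List.getElem?_eq_some_iff.mp hli).1
              obtain ⟨hget, hmem⟩ := getLast_facts hv.1 (St.node [])
              by_cases hi : i = l.length - 1
              · have ht : t = l.getLastD (St.node []) := by
                  rw [hi, hget] at hli; exact (Option.some.inj hli).symm
                have hq : q ≠ topAddr (l.getLastD (St.node [])) n := by
                  intro hh
                  exact hne (by simp [topAddr, hi, hh, -List.getLastD_eq_getLast?])
                have := topMax (hv.2 _ hmem) ⟨δ, ht ▸ hδ⟩ hq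
                simpa [topAddr, hi, -List.getLastD_eq_getLast?] using ltd_cons_same this
              · have : i < l.length - 1 := by omega
                simpa [topAddr, -List.getLastD_eq_getLast?] using ltd_cons_lt (p := q)
                  (q := topAddr (l.getLastD (St.node [])) n) this

end Stacks
section ModAt
variable {Γ : Type}

@[simp] lemma sub?_nil (s : St Γ) : sub? s [] = some s := by cases s <;> rfl

@[simp] lemma modAt_nil (s : St Γ) (f : St Γ → Option (St Γ)) : modAt s [] f = f s := by
  cases s <;> rfl

lemma subMod : ∀ {p : List ℕ} {s s' : St Γ} {f : St Γ → Option (St Γ)},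
    modAt s p f = some s' →
    ∃ u u', sub? s p = some u ∧ f u = some u' ∧ ∀ q, sub? s' (p ++ q) = sub? u' q
  | [], s, s', f, h => ⟨s, s', sub?_nil s, by simpa using h, fun q => by simp⟩
  | i :: p, St.leaf _, s', f, h => by simp [modAt] at h
  | i :: p, St.node l, s', f, h => by
      simp only [modAt] at h
      cases hli : l[i]? with
      | none => rw [hli] at h; simp at h
      | some t =>
          simp only [hli] at h
          cases hm : modAt t p f with
          | none => rw [hm] at h; simp at h
          | some t₂ =>
              simp only [hm, Option.some.injEq] at h
              subst h
              obtain ⟨u, u', h1, h2, h3⟩ := subMod hm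
              have hil : i < l.length := (List.getElem?_eq_some_iff.mp hli).1
              have hset : (l.set i t₂)[i]? = some t₂ := by
                rw [List.getElem?_set]; simp [hil]
              refine ⟨u, u', by simp [sub?, hli, h1], h2, fun q => ?_⟩
              simp [sub?, hset, h3]

lemma validBack : ∀ {p : List ℕ} {s s' : St Γ} {f : St Γ → Option (St Γ)}
    (T : List ℕ → List ℕ),
    modAt s p f = some s' →
    (∀ v w, sub? s p = some v → f v = some w → ∀ q, LeafAt w q → LeafAt v (T q)) →
    ∀ q, LeafAt s' q →
      LeafAt s (if p <+: q then p ++ T (q.drop p.length) else q)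
  | [], s, s', f, T, h, hf, q, hq => by
      simpa using hf s s' (sub?_nil s) (by simpa using h) q hq
  | i :: p, St.leaf _, s', f, T, h, hf, q, hq => by simp [modAt] at h
  | i :: p, St.node l, s', f, T, h, hf, q, hq => by
      simp only [modAt] at h
      cases hli : l[i]? with
      | none => rw [hli] at h; simp at h
      | some t =>
          simp only [hli] at h
          cases hm : modAt t p f with
          | none => rw [hm] at h; simp at h
          | some t₂ =>
              simp only [hm, Option.some.injEq] at h
              subst h
              have hil : i < l.length := (List.getElem?_eq_some_iff.mp hli).1
              obtain ⟨δ, hδ⟩ := hq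
              cases q with
              | nil => simp [sub?] at hδ
              | cons j q' =>
                  simp only [sub?] at hδ
                  by_cases hij : j = i
                  · subst hij
                    have hset : (l.set j t₂)[j]? = some t₂ := by
                      rw [List.getElem?_set]; simp [hil]
                    simp only [hset] at hδ
                    have hrec := validBack T hm
                      (fun v w hv hw => hf v w (by simp [sub?, hli, hv]) hw) q' ⟨δ, hδ⟩
                    by_cases hpre : p <+: q'
                    · rw [if_pos (by rw [List.cons_prefix_cons]; exact ⟨rfl, hpre⟩)]
                      rw [if_pos hpre] at hrec
                      obtain ⟨ε, hε⟩ := hrec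
                      exact ⟨ε, by simpa [sub?, hli] using hε⟩
                    · rw [if_neg (by rw [List.cons_prefix_cons]; rintro ⟨-, hc⟩; exact hpre hc)]
                      rw [if_neg hpre] at hrec
                      obtain ⟨ε, hε⟩ := hrec
                      exact ⟨ε, by simpa [sub?, hli] using hε⟩
                  · have hset : (l.set i t₂)[j]? = l[j]? := by
                      rw [List.getElem?_set, if_neg (fun hh : i = j => hij hh.symm)]
                    simp only [hset] at hδ
                    rw [if_neg (by rw [List.cons_prefix_cons]; rintro ⟨hc, -⟩; exact hij hc.symm)]
                    exact ⟨δ, by simpa [sub?] using hδ⟩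

lemma popStk_leafBack {v w : St Γ} (h : popStk v = some w) :
    ∀ q, LeafAt w q → LeafAt v q := by
  cases v with
  | leaf _ => simp [popStk] at h
  | node l =>
      simp only [popStk] at h
      split at h
      case isTrue hlen =>
        rintro q ⟨δ, hδ⟩
        obtain rfl : w = St.node l.dropLast := (Option.some.inj h).symm
        cases q with
        | nil => simp at hδ
        | cons j q' =>
            simp only [sub?] at hδ
            cases hd : l.dropLast[j]? with
            | none => rw [hd] at hδ; simp at hδ
            | some u =>
                simp only [hd] at hδ
                have hj : l[j]? = some u := by
                  rw [List.getElem?_dropLast] at hd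
                  split at hd
                  · exact hd
                  · simp at hd
                exact ⟨δ, by simp [sub?, hj, hδ]⟩
      case isFalse => simp at h

end ModAt
section Push
variable {Γ : Type}

lemma set_append_cons (ta : List ℕ) (c c' : ℕ) (rest : List ℕ) :
    (ta ++ c :: rest).set ta.length c' = ta ++ c' :: rest := by
  induction ta with
  | nil => rfl
  | cons a ta ih => simpa using ih

lemma dupTop_leafBack {r : ℕ} {γ : Γ} {l : List (St Γ)} {w : St Γ}
    (h : dupTop r γ (St.node l) = some w) :
    ∀ q, LeafAt w q →
      LeafAt (St.node l)
        (match q with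
         | [] => ([] : List ℕ)
         | c :: q' => if c = l.length then (l.length - 1) :: q' else c :: q') := by
  simp only [dupTop] at h
  cases hg : l.getLast? with
  | none => rw [hg] at h; simp at h
  | some tl =>
      simp only [hg] at h
      cases hm : modAt tl (topAddr tl (r - 1)) (fun u =>
          match u with
          | St.leaf _ => some (St.leaf γ)
          | St.node _ => none) with
      | none => rw [hm] at h; simp at h
      | some t' =>
          simp only [hm, Option.some.injEq] at h
          obtain rfl := h.symm
          have hgl : l[l.length - 1]? = some tl := by
            rw [← List.getLast?_eq_getElem?]; exact hg
          rintro q ⟨δ, hδ⟩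
          cases q with
          | nil => simp at hδ
          | cons c q' =>
              simp only [sub?] at hδ
              by_cases hc : c = l.length
              · subst hc
                simp only [List.getElem?_concat_length] at hδ
                have hin := validBack (T := id) hm
                  (fun v w' hv hw' q'' hq'' => by
                    cases v with
                    | node _ => simp at hw'
                    | leaf δ₀ =>
                        simp only [Option.some.injEq] at hw'
                        obtain rfl := hw'.symm
                        obtain ⟨ε, hε⟩ := hq''
                        cases q'' with
                        | nil => exact ⟨δ₀, sub?_nil _⟩
                        | cons _ _ => simp [sub?] at hε) q' ⟨δ, hδ⟩
                have hq' : (if topAddr tl (r - 1) <+: q' then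
                    topAddr tl (r - 1) ++ id (q'.drop (topAddr tl (r - 1)).length)
                    else q') = q' := by
                  split
                  case isTrue hp =>
                    obtain ⟨rest, rfl⟩ := hp
                    rw [id, List.drop_left' rfl]
                  case isFalse => rfl
                rw [hq'] at hin
                obtain ⟨ε, hε⟩ := hin
                exact ⟨ε, by simp [sub?, hgl, hε, if_pos rfl]⟩
              · cases hlt : (l ++ [t'])[c]? with
                | none => rw [hlt] at hδ; simp at hδ
                | some u =>
                    have hcl : c < l.length := by
                      have := (List.getElem?_eq_some_iff.mp hlt).1
                      simp only [List.length_append, List.length_singleton] at this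
                      omega
                    have hlc : l[c]? = some u := by
                      rw [List.getElem?_append, if_pos hcl] at hlt
                      exact hlt
                    simp only [hlt] at hδ
                    exact ⟨δ, by simp [sub?, hlc, hδ, if_neg hc]⟩

lemma push_setup {n r : ℕ} {γ : Γ} {s s' : St Γ} (hv : IsValid n s)
    (hr1 : 1 ≤ r) (hrn : r ≤ n) (h : pushOp n r γ s = some s') :
    ∃ l : List (St Γ), sub? s (topAddr s (n - r)) = some (St.node l) ∧ l ≠ [] ∧
      sizeAt s (topAddr s (n - r)) = l.length ∧
      modAt s (topAddr s (n - r)) (dupTop r γ) = some s' := by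
  obtain ⟨u, hu, hvu⟩ := topChain hv (show n - r ≤ n by omega)
  have hnm : n - (n - r) = r := by omega
  rw [hnm] at hvu
  obtain ⟨r', rfl⟩ : ∃ r', r = r' + 1 := ⟨r - 1, by omega⟩
  cases u with
  | leaf _ => simp [IsValid] at hvu
  | node l => exact ⟨l, hu, hvu.1, by simp [sizeAt, hu], h⟩

lemma push_bound {n r : ℕ} {γ : Γ} {s s' : St Γ} (hv : IsValid n s)
    (hr1 : 1 ≤ r) (hrn : r ≤ n) (h : pushOp n r γ s = some s') :
    ∀ q c, LeafAt s' q → q.take (n - r) = topAddr s (n - r) → q[n - r]? = some c →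
      c ≤ sizeAt s (topAddr s (n - r)) := by
  obtain ⟨l, hu, hl0, hsz, hmod⟩ := push_setup hv hr1 hrn h
  obtain ⟨u₀, u', hu₀, hdup, hsub⟩ := subMod hmod
  obtain rfl : u₀ = St.node l := by rw [hu] at hu₀; exact (Option.some.inj hu₀).symm
  intro q c hq htake hqm
  have hqsplit : q = topAddr s (n - r) ++ q.drop (n - r) := by
    conv_lhs => rw [← List.take_append_drop (n - r) q]
    rw [htake]
  -- the drop starts with c
  have hta : (topAddr s (n - r)).length = n - r := topAddr_len hv (by omega)
  cases hd : q.drop (n - r) with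
  | nil =>
      have hnone : q[n - r]? = none := by
        have h0 := List.getElem?_drop (xs := q) (i := n - r) (j := 0)
        rw [hd] at h0
        simpa using h0.symm
      rw [hnone] at hqm; simp at hqm
  | cons c₀ rest =>
      have hc₀ : c₀ = c := by
        have : q[n - r]? = some c₀ := by
          have := List.getElem?_drop (xs := q) (i := n - r) (j := 0)
          rw [hd] at this
          simpa using this.symm
        rw [this] at hqm; exact Option.some.inj hqm
      subst hc₀
      -- analyze dupTop output
      simp only [dupTop] at hdup
      cases hg : l.getLast? with
      | none => rw [hg] at hdup; simp at hdup
      | some tl =>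
          simp only [hg] at hdup
          cases hm : modAt tl (topAddr tl (r - 1)) (fun u =>
              match u with
              | St.leaf _ => some (St.leaf γ)
              | St.node _ => none) with
          | none => rw [hm] at hdup; simp at hdup
          | some t' =>
              simp only [hm, Option.some.injEq] at hdup
              obtain rfl := hdup.symm
              obtain ⟨δ, hδ⟩ := hq
              rw [hqsplit, hd, hsub] at hδ
              simp only [sub?] at hδ
              cases hlt : (l ++ [t'])[c₀]? with
              | none => rw [hlt] at hδ; simp at hδ
              | some u =>
                  have := (List.getElem?_eq_some_iff.mp hlt).1
                  simp only [List.length_append, List.length_singleton] at this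
                  omega

lemma push_leafBack {n r : ℕ} {γ : Γ} {s s' : St Γ} (hv : IsValid n s)
    (hr1 : 1 ≤ r) (hrn : r ≤ n) (h : pushOp n r γ s = some s') :
    ∀ q, LeafAt s' q → LeafAt s (histStep n (Op.push r γ) s q) := by
  obtain ⟨l, hu, hl0, hsz, hmod⟩ := push_setup hv hr1 hrn h
  have hta : (topAddr s (n - r)).length = n - r := topAddr_len hv (by omega)
  intro q hq
  have hvb := validBack
    (T := fun q => match q with
      | [] => ([] : List ℕ)
      | c :: q' => if c = l.length then (l.length - 1) :: q' else c :: q') hmod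
    (fun v w hv' hw' => by
      obtain rfl : v = St.node l := by rw [hu] at hv'; exact (Option.some.inj hv').symm
      exact dupTop_leafBack hw') q hq
  have hphi : histStep n (Op.push r γ) s q =
      if q.take (n - r + 1) = topAddr s (n - r) ++ [l.length]
      then q.set (n - r) (l.length - 1) else q := by
    simp only [histStep, hsz]
  rw [hphi]
  by_cases hpre : topAddr s (n - r) <+: q
  · obtain ⟨rest, rfl⟩ := hpre
    rw [if_pos (List.prefix_append _ _), List.drop_left] at hvb
    have htk : (topAddr s (n - r) ++ rest).take (n - r + 1) =
        topAddr s (n - r) ++ rest.take 1 := by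
      rw [List.take_append,
        List.take_of_length_le (by omega : (topAddr s (n - r)).length ≤ n - r + 1), hta]
      have h1 : n - r + 1 - (n - r) = 1 := by omega
      rw [h1]
    cases rest with
    | nil =>
        rw [if_neg]
        · simpa using hvb
        · intro hh
          have := congrArg List.length hh
          rw [htk] at hh
          have := congrArg List.length hh
          simp at this
    | cons c rest' =>
        rw [htk]
        have ht1 : (c :: rest').take 1 = [c] := rfl
        rw [ht1]
        by_cases hc : c = l.length
        · rw [if_pos (by rw [hc])]
          have hset := set_append_cons (topAddr s (n - r)) c (l.length - 1) rest'
          rw [hta] at hset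
          rw [hset]
          simpa [hc] using hvb
        · rw [if_neg (fun hh => hc (by
            have := List.append_cancel_left hh
            exact (List.cons.injEq _ _ _ _ ▸ this).1.trans rfl))]
          simpa [hc] using hvb
  · rw [if_neg hpre] at hvb
    rw [if_neg (fun hcond => hpre (by
      have h1 : q.take (n - r) = topAddr s (n - r) := by
        have h2 : q.take (n - r) = (q.take (n - r + 1)).take (n - r) := by
          rw [List.take_take]
          congr 1
          omega
        rw [h2, hcond, List.take_left' hta]
      rw [← h1]
      exact List.take_prefix _ q))]
    exact hvb

end Push
section Runs
variable {n : ℕ} {A Γ : Type} {D : DPDA n A Γ}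

lemma step_isValid {c c' : D.Q × St Γ} {lab : Option A} (h : Step D c lab c') :
    IsValid n c.2 := by
  cases h with
  | read _ hv _ _ => exact hv
  | op hv _ _ _ => exact hv

lemma step_det {c c₁ c₂ : D.Q × St Γ} {l₁ l₂ : Option A} {st : A}
    (h₁ : Step D c l₁ c₁) (h₂ : Step D c l₂ c₂)
    (hs₁ : OnlyStar st l₁) (hs₂ : OnlyStar st l₂) : c₁ = c₂ := by
  cases h₁ with
  | @read q s γ f a hv htop hδ =>
      obtain rfl : a = st := by
        rcases hs₁ with h | h
        · simp at h
        · exact Option.some.inj h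
      cases h₂ with
      | @read q' s' γ' f' a' hv' htop' hδ' =>
          obtain rfl : a' = a := by
            rcases hs₂ with h | h
            · simp at h
            · exact Option.some.inj h
          obtain rfl : γ = γ' := Option.some.inj (htop.symm.trans htop')
          cases hδ.symm.trans hδ'
          rfl
      | @op q' s' s₂ γ' q₂ o hv' htop' hδ' happ' =>
          obtain rfl : γ = γ' := Option.some.inj (htop.symm.trans htop')
          exact absurd (hδ.symm.trans hδ') (by simp)
  | @op q s s₁ γ q₁ o hv htop hδ happ =>
      cases h₂ with
      | @read q' s' γ' f' a' hv' htop' hδ' =>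
          obtain rfl : γ = γ' := Option.some.inj (htop.symm.trans htop')
          exact absurd (hδ.symm.trans hδ') (by simp)
      | @op q' s' s₂ γ' q₂ o' hv' htop' hδ' happ' =>
          obtain rfl : γ = γ' := Option.some.inj (htop.symm.trans htop')
          cases hδ.symm.trans hδ'
          obtain rfl : s₁ = s₂ := Option.some.inj (happ.symm.trans happ')
          rfl

/-- The one-step history function at step `j` of an infinite run. -/
def iphi (S : InfRun D) (j : ℕ) : List ℕ → List ℕ :=
  match topLeaf? n (S.cfg j).2 with
  | none => id
  | some γ =>
      match D.δ (S.cfg j).1 γ with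
      | Trans.read _ => id
      | Trans.op _ o => histStep n o (S.cfg j).2

/-- Backwards history over the interval `[i, i + t]` of an infinite run. -/
def hh (S : InfRun D) (i : ℕ) : ℕ → List ℕ → List ℕ
  | 0, p => p
  | t + 1, p => hh S i t (iphi S (i + t) p)

lemma histTo_sub (S : InfRun D) (i j : ℕ) :
    ∀ t p, (S.sub i j).histTo 0 t p = hh S i t p := by
  intro t
  induction t with
  | zero => intro p; rfl
  | succ t ih =>
      intro p
      show (S.sub i j).histTo 0 (t + 1) p = _
      rw [Run.histTo]
      rw [if_neg (by omega)]
      exact ih _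

lemma hh_comp (S : InfRun D) (i a : ℕ) : ∀ b p,
    hh S i (a + b) p = hh S i a (hh S (i + a) b p) := by
  intro b
  induction b with
  | zero => intro p; rfl
  | succ b ih =>
      intro p
      show hh S i (a + b + 1) p = _
      rw [hh, ih]
      conv_rhs => rw [hh]
      rw [← Nat.add_assoc]

lemma isUpper_sub (S : InfRun D) {i j : ℕ} (hij : i ≤ j) :
    (S.sub i j).IsUpper 0 ↔
      hh S i (j - i) (topAddr (S.cfg j).2 n) = topAddr (S.cfg i).2 n := by
  unfold Run.IsUpper
  rw [histTo_sub]
  have h2 : (S.sub i j).cfg (S.sub i j).len = S.cfg j := by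
    show S.cfg (i + (j - i)) = _
    congr 1
    omega
  have h3 : (S.sub i j).cfg 0 = S.cfg i := by
    show S.cfg (i + 0) = _
    congr 1
  rw [h2, h3]
  rfl

lemma histTo_congr {R₁ R₂ : Run D} (hcfg : ∀ t ≤ R₁.len, R₁.cfg t = R₂.cfg t) :
    ∀ j ≤ R₁.len, ∀ p, R₁.histTo 0 j p = R₂.histTo 0 j p := by
  intro j
  induction j with
  | zero => intro _ p; rfl
  | succ j ih =>
      intro hj p
      rw [Run.histTo, Run.histTo, if_neg (by omega), if_neg (by omega)]
      have hstep : R₁.stepHist j = R₂.stepHist j := by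
        unfold Run.stepHist
        rw [hcfg j (by omega)]
      rw [hstep]
      exact ih (by omega) _

lemma isUpper_congr {R₁ R₂ : Run D} (hlen : R₁.len = R₂.len)
    (hcfg : ∀ t ≤ R₁.len, R₁.cfg t = R₂.cfg t) : R₁.IsUpper 0 ↔ R₂.IsUpper 0 := by
  unfold Run.IsUpper
  rw [← hlen, histTo_congr hcfg R₁.len le_rfl, hcfg R₁.len le_rfl, hcfg 0 (by omega)]

lemma op_leafBack {s s' : St Γ} (hv : IsValid n s) {o : Op Γ}
    (h : applyOp n o s = some s') :
    ∀ p, LeafAt s' p → LeafAt s (histStep n o s p) := by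
  cases o with
  | pop k =>
      simp only [applyOp] at h
      split at h
      case isFalse => simp at h
      case isTrue hk =>
        intro p hp
        have hvb := validBack (T := id) h
          (fun v w _ hw q hq => popStk_leafBack hw q hq) p hp
        show LeafAt s p
        split at hvb
        case isTrue hpre =>
          obtain ⟨rest, rfl⟩ := hpre
          rwa [id, List.drop_left] at hvb
        case isFalse => exact hvb
  | push r γ =>
      simp only [applyOp] at h
      split at h
      case isFalse => simp at h
      case isTrue hk => exact push_leafBack hv hk.1 hk.2 h

lemma iphi_leafBack (S : InfRun D) (t : ℕ) (p : List ℕ)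
    (hp : LeafAt (S.cfg (t + 1)).2 p) : LeafAt (S.cfg t).2 (iphi S t p) := by
  have hst := S.ok t
  rcases hcfg : S.cfg t with ⟨q, s⟩
  rcases hcfg' : S.cfg (t + 1) with ⟨q', s'⟩
  rw [hcfg, hcfg'] at hst
  rw [hcfg'] at hp
  unfold iphi
  rw [hcfg]
  generalize S.lab t = lb at hst
  cases hst with
  | @read q s γ f a hv htop hδ =>
      simp only [htop, hδ]
      simpa using hp
  | @op q s s₁ γ q₁ o hv htop hδ happ =>
      simp only [htop, hδ]
      exact op_leafBack hv happ p hp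

lemma hh_leafAt (S : InfRun D) : ∀ (b i : ℕ) (p : List ℕ),
    LeafAt (S.cfg (i + b)).2 p → LeafAt (S.cfg i).2 (hh S i b p) := by
  intro b
  induction b with
  | zero => intro i p hp; exact hp
  | succ b ih =>
      intro i p hp
      rw [hh]
      exact ih i _ (iphi_leafBack S (i + b) p (by rwa [show i + b + 1 = i + (b + 1) by omega]))

end Runs
lemma ltd_congr {p q p' q' : List ℕ}
    (hp : p[fd p q]? = p'[fd p' q']?) (hq : q[fd p q]? = q'[fd p' q']?) :
    ltd p q ↔ ltd p' q' := by
  unfold ltd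
  rw [hp, hq]

lemma not_ltd_of {p q : List ℕ} {a b : ℕ} (ha : p[fd p q]? = some a)
    (hb : q[fd p q]? = some b) (h : ¬ a < b) : ¬ ltd p q := by
  rintro ⟨a', b', ha', hb', h'⟩
  rw [ha] at ha'
  rw [hb] at hb'
  cases ha'
  cases hb'
  omega

lemma ltd_iff_not {p q : List ℕ} (hne : p ≠ q) (hl : p.length = q.length) :
    ltd p q ↔ ¬ ltd q p := by
  constructor
  · exact fun h h' => ltd_asymm h h'
  · intro h
    rcases ltd_or hne hl with h1 | h1
    · exact h1
    · exact absurd h1 h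

section PushPair
variable {Γ : Type}

lemma push_pair_aux {n r : ℕ} {s s' : St Γ} (hv : IsValid n s) (hv' : IsValid n s')
    {γ : Γ} (hr1 : 1 ≤ r) (hrn : r ≤ n) (h : pushOp n r γ s = some s')
    {l : List (St Γ)} (hu : sub? s (topAddr s (n - r)) = some (St.node l))
    (hsz : sizeAt s (topAddr s (n - r)) = l.length)
    {x' y' : List ℕ} (hx' : LeafAt s' x') (hy' : LeafAt s' y') (hne' : x' ≠ y')
    (hRx : x'.take (n - r + 1) = topAddr s (n - r) ++ [l.length])
    (hRy : ¬ y'.take (n - r + 1) = topAddr s (n - r) ++ [l.length])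
    (hne : x'.set (n - r) (l.length - 1) ≠ y') :
    fd x' y' ≤ fd (x'.set (n - r) (l.length - 1)) y' ∧
      (fd (x'.set (n - r) (l.length - 1)) y' = fd x' y' →
        (ltd (x'.set (n - r) (l.length - 1)) y' ↔ ltd x' y')) := by
  have hta : (topAddr s (n - r)).length = n - r := topAddr_len hv (by omega)
  have hxl : x'.length = n := leafAt_len hv' hx'
  have hyl : y'.length = n := leafAt_len hv' hy'
  have hmn : n - r < n := by omega
  have hgetx : ∀ j, j ≤ n - r → x'[j]? = (topAddr s (n - r) ++ [l.length])[j]? := by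
    intro j hj
    have h1 := List.getElem?_take (l := x') (i := n - r + 1) (j := j)
    rw [hRx, if_pos (by omega)] at h1
    exact h1.symm
  have hx'm : x'[n - r]? = some l.length := by
    have hcc := List.getElem?_concat_length (l := topAddr s (n - r)) (a := l.length)
    rw [hta] at hcc
    rw [hgetx _ le_rfl]
    exact hcc
  have he'le : fd x' y' ≤ n - r := by
    by_contra hgt
    push_neg at hgt
    apply hRy
    apply List.ext_getElem?
    intro j
    rw [List.getElem?_take]
    by_cases hj : j < n - r + 1
    · rw [if_pos hj, ← fd_get_eq (by omega : j < fd x' y'), hgetx _ (by omega)]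
    · rw [if_neg hj, List.getElem?_eq_none]
      simp [hta]
      omega
  rcases lt_or_eq_of_le he'le with hlt | heqq
  · -- first difference strictly inside the common prefix
    have hfd2 : fd (x'.set (n - r) (l.length - 1)) y' = fd x' y' := by
      apply fd_eq_of
      · intro j hj
        rw [List.getElem?_set, if_neg (by omega : ¬ (n - r = j))]
        exact fd_get_eq hj
      · rw [List.getElem?_set, if_neg (by omega : ¬ (n - r = fd x' y'))]
        exact fd_get_ne hne'
    refine ⟨le_of_eq hfd2.symm, fun _ => ?_⟩
    apply ltd_congr
    · rw [hfd2, List.getElem?_set, if_neg (by omega : ¬ (n - r = fd x' y'))]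
    · rw [hfd2]
  · -- first difference exactly at level n - r
    obtain ⟨c, hc⟩ : ∃ c, y'[n - r]? = some c :=
      ⟨_, List.getElem?_eq_getElem (by omega : n - r < y'.length)⟩
    have hcne : c ≠ l.length := by
      intro hcc
      apply fd_get_ne hne'
      rw [← heqq] at hx'm hc
      rw [hx'm, hc, hcc]
    have hytake : y'.take (n - r) = topAddr s (n - r) := by
      apply List.ext_getElem?
      intro j
      rw [List.getElem?_take]
      by_cases hj : j < n - r
      · rw [if_pos hj, ← fd_get_eq (by omega : j < fd x' y'), hgetx _ (by omega),
          List.getElem?_append, if_pos (by omega : j < (topAddr s (n - r)).length)]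
      · rw [if_neg hj, List.getElem?_eq_none (by omega : (topAddr s (n - r)).length ≤ j)]
    have hcle : c ≤ l.length := by
      have := push_bound hv hr1 hrn h y' c hy' hytake hc
      rwa [hsz] at this
    have hclt : c < l.length := by omega
    have hXm : (x'.set (n - r) (l.length - 1))[n - r]? = some (l.length - 1) := by
      rw [List.getElem?_set, if_pos rfl, if_pos (by omega : n - r < x'.length)]
    have hagree : ∀ j, j < n - r →
        (x'.set (n - r) (l.length - 1))[j]? = y'[j]? := by
      intro j hj
      rw [List.getElem?_set, if_neg (by omega : ¬ (n - r = j))]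
      exact fd_get_eq (by omega)
    by_cases hc1 : c = l.length - 1
    · -- the two addresses merge at level n - r : strict decrease backwards
      have hgt2 : n - r < fd (x'.set (n - r) (l.length - 1)) y' := by
        by_contra hle
        push_neg at hle
        apply fd_get_ne hne
        rcases lt_or_eq_of_le hle with hl2 | hl2
        · exact hagree _ hl2
        · rw [hl2, hXm, hc, hc1]
      exact ⟨by omega, fun hab => by omega⟩
    · have hclt1 : c < l.length - 1 := by omega
      have hfd2 : fd (x'.set (n - r) (l.length - 1)) y' = n - r := by
        apply fd_eq_of
        · exact fun j hj => hagree j hj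
        · rw [hXm, hc]
          intro hcc
          cases hcc
          omega
      refine ⟨by omega, fun _ => ?_⟩
      have h1 : ¬ ltd (x'.set (n - r) (l.length - 1)) y' :=
        not_ltd_of (by rw [hfd2]; exact hXm) (by rw [hfd2]; exact hc) (by omega)
      have h2 : ¬ ltd x' y' :=
        not_ltd_of (by rw [heqq]; exact hx'm) (by rw [heqq]; exact hc) (by omega)
      exact iff_of_false h1 h2

lemma push_pair {n r : ℕ} {s s' : St Γ} (hv : IsValid n s) (hv' : IsValid n s')
    {γ : Γ} (hr1 : 1 ≤ r) (hrn : r ≤ n) (h : pushOp n r γ s = some s')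
    {x' y' : List ℕ} (hx' : LeafAt s' x') (hy' : LeafAt s' y') (hne' : x' ≠ y')
    (hne : histStep n (Op.push r γ) s x' ≠ histStep n (Op.push r γ) s y') :
    fd x' y' ≤ fd (histStep n (Op.push r γ) s x') (histStep n (Op.push r γ) s y') ∧
      (fd (histStep n (Op.push r γ) s x') (histStep n (Op.push r γ) s y') = fd x' y' →
        (ltd (histStep n (Op.push r γ) s x') (histStep n (Op.push r γ) s y') ↔
          ltd x' y')) := by
  obtain ⟨l, hu, hl0, hsz, hmod⟩ := push_setup hv hr1 hrn h
  have hphi : ∀ z : List ℕ, histStep n (Op.push r γ) s z =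
      if z.take (n - r + 1) = topAddr s (n - r) ++ [l.length]
      then z.set (n - r) (l.length - 1) else z := by
    intro z
    simp only [histStep, hsz]
  have hxl : x'.length = n := leafAt_len hv' hx'
  have hyl : y'.length = n := leafAt_len hv' hy'
  have hmn : n - r < n := by omega
  rw [hphi x', hphi y'] at hne ⊢
  by_cases hRx : x'.take (n - r + 1) = topAddr s (n - r) ++ [l.length] <;>
    by_cases hRy : y'.take (n - r + 1) = topAddr s (n - r) ++ [l.length]
  · -- both in the new copy
    rw [if_pos hRx, if_pos hRy] at hne ⊢
    have hgety : ∀ j, j ≤ n - r → y'[j]? = (topAddr s (n - r) ++ [l.length])[j]? := by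
      intro j hj
      have h1 := List.getElem?_take (l := y') (i := n - r + 1) (j := j)
      rw [hRy, if_pos (by omega)] at h1
      exact h1.symm
    have hgetx : ∀ j, j ≤ n - r → x'[j]? = (topAddr s (n - r) ++ [l.length])[j]? := by
      intro j hj
      have h1 := List.getElem?_take (l := x') (i := n - r + 1) (j := j)
      rw [hRx, if_pos (by omega)] at h1
      exact h1.symm
    have hgt : n - r < fd x' y' := by
      by_contra hle
      push_neg at hle
      exact fd_get_ne hne' ((hgetx _ hle).trans (hgety _ hle).symm)
    have hfd2 : fd (x'.set (n - r) (l.length - 1)) (y'.set (n - r) (l.length - 1)) =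
        fd x' y' := by
      apply fd_eq_of
      · intro j hj
        rw [List.getElem?_set, List.getElem?_set]
        by_cases hjm : n - r = j
        · rw [if_pos hjm, if_pos hjm, if_pos (by omega : n - r < x'.length),
            if_pos (by omega : n - r < y'.length)]
        · rw [if_neg hjm, if_neg hjm]
          exact fd_get_eq hj
      · rw [List.getElem?_set, List.getElem?_set,
          if_neg (by omega : ¬ (n - r = fd x' y')), if_neg (by omega : ¬ (n - r = fd x' y'))]
        exact fd_get_ne hne'
    refine ⟨le_of_eq hfd2.symm, fun _ => ?_⟩
    apply ltd_congr
    · rw [hfd2, List.getElem?_set, if_neg (by omega : ¬ (n - r = fd x' y'))]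
    · rw [hfd2, List.getElem?_set, if_neg (by omega : ¬ (n - r = fd x' y'))]
  · rw [if_pos hRx, if_neg hRy] at hne ⊢
    exact push_pair_aux hv hv' hr1 hrn h hu hsz hx' hy' hne' hRx hRy hne
  · -- mirrored case
    rw [if_neg hRx, if_pos hRy] at hne ⊢
    have hres := push_pair_aux hv hv' hr1 hrn h hu hsz hy' hx' (Ne.symm hne')
      hRy hRx (Ne.symm hne)
    refine ⟨by rw [fd_comm x' y', fd_comm x' (y'.set (n - r) (l.length - 1))]
               exact hres.1, fun hab => ?_⟩
    have hab' : fd (y'.set (n - r) (l.length - 1)) x' = fd y' x' := by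
      rw [fd_comm, fd_comm y' x']
      exact hab
    have hiff := hres.2 hab'
    have hlen1 : x'.length = (y'.set (n - r) (l.length - 1)).length := by
      rw [List.length_set, hxl, hyl]
    rw [ltd_iff_not hne hlen1, ltd_iff_not hne' (hxl.trans hyl.symm)]
    exact not_congr hiff
  · rw [if_neg hRx, if_neg hRy] at hne ⊢
    exact ⟨le_rfl, fun _ => Iff.rfl⟩

lemma op_pair {n : ℕ} {s s' : St Γ} (hv : IsValid n s) (hv' : IsValid n s') {o : Op Γ}
    (h : applyOp n o s = some s')
    {x' y' : List ℕ} (hx' : LeafAt s' x') (hy' : LeafAt s' y') (hne' : x' ≠ y')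
    (hne : histStep n o s x' ≠ histStep n o s y') :
    fd x' y' ≤ fd (histStep n o s x') (histStep n o s y') ∧
      (fd (histStep n o s x') (histStep n o s y') = fd x' y' →
        (ltd (histStep n o s x') (histStep n o s y') ↔ ltd x' y')) := by
  cases o with
  | pop k => exact ⟨le_rfl, fun _ => Iff.rfl⟩
  | push r γ =>
      simp only [applyOp] at h
      split at h
      case isFalse => simp at h
      case isTrue hk => exact push_pair hv hv' hk.1 hk.2 h hx' hy' hne' hne

end PushPair

section RunPair
variable {n : ℕ} {A Γ : Type} {D : DPDA n A Γ}

lemma iphi_pair (S : InfRun D) (t : ℕ) {x' y' : List ℕ}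
    (hx' : LeafAt (S.cfg (t + 1)).2 x') (hy' : LeafAt (S.cfg (t + 1)).2 y')
    (hne' : x' ≠ y') (hne : iphi S t x' ≠ iphi S t y') :
    fd x' y' ≤ fd (iphi S t x') (iphi S t y') ∧
      (fd (iphi S t x') (iphi S t y') = fd x' y' →
        (ltd (iphi S t x') (iphi S t y') ↔ ltd x' y')) := by
  have hv' : IsValid n (S.cfg (t + 1)).2 := step_isValid (S.ok (t + 1))
  have hst := S.ok t
  rcases hcfg : S.cfg t with ⟨q, s⟩
  rcases hcfg' : S.cfg (t + 1) with ⟨q', s'⟩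
  rw [hcfg, hcfg'] at hst
  rw [hcfg'] at hx' hy' hv'
  unfold iphi at hne ⊢
  rw [hcfg] at hne ⊢
  generalize S.lab t = lb at hst
  cases hst with
  | @read q s γ f a hv htop hδ =>
      simp only [htop, hδ] at hne ⊢
      exact ⟨le_rfl, fun _ => Iff.rfl⟩
  | @op q s s₁ γ q₁ o hv htop hδ happ =>
      simp only [htop, hδ] at hne ⊢
      exact op_pair hv hv' happ hx' hy' hne' hne

end RunPair
section Key
variable {n : ℕ} {A Γ : Type} {D : DPDA n A Γ}

/-- The subrun `[i,j]` of `S` is `0`-upper. -/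
def uppr (S : InfRun D) (i j : ℕ) : Prop :=
  hh S i (j - i) (topAddr (S.cfg j).2 n) = topAddr (S.cfg i).2 n

lemma uppr_trans (S : InfRun D) {i j k : ℕ} (hij : i ≤ j) (hjk : j ≤ k)
    (h1 : uppr S i j) (h2 : uppr S j k) : uppr S i k := by
  unfold uppr at *
  rw [show k - i = (j - i) + (k - j) by omega, hh_comp,
    show i + (j - i) = j by omega, h2, h1]

lemma uppr_cancel (S : InfRun D) {i j k : ℕ} (hij : i ≤ j) (hjk : j ≤ k)
    (h1 : uppr S i k) (h2 : uppr S j k) : uppr S i j := by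
  unfold uppr at *
  rw [← h1, show k - i = (j - i) + (k - j) by omega, hh_comp,
    show i + (j - i) = j by omega, h2]

lemma key (hn : 1 ≤ n) (S : InfRun D) {I K : Set ℕ} {m : ℕ}
    (hIinf : I.Infinite) (hKinf : K.Infinite) (hI0 : 0 ∈ I) (hKm : m ∈ K)
    (hKge : ∀ k ∈ K, m ≤ k)
    (hupI : ∀ i ∈ I, ∀ j ∈ I, i ≤ j → uppr S i j)
    (hupK : ∀ k ∈ K, ∀ k' ∈ K, k ≤ k' → uppr S k k') :
    uppr S 0 m := by
  classical
  by_contra hupm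
  -- an alternating chain of points of K and I
  have chain : ∀ c : ℕ, ∃ g : ℕ → ℕ, g 0 = m ∧ (∀ u, u < c → g u < g (u + 1)) ∧
      (∀ u, u ≤ c → (Even u → g u ∈ K) ∧ (¬ Even u → g u ∈ I)) := by
    intro c
    induction c with
    | zero =>
        refine ⟨fun _ => m, rfl, by omega, fun u hu => ?_⟩
        obtain rfl : u = 0 := Nat.le_zero.mp hu
        exact ⟨fun _ => hKm, fun h => absurd Even.zero h⟩
    | succ c ih =>
        obtain ⟨g, hg0, hmono, hmem⟩ := ih
        by_cases hev : Even (c + 1)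
        · obtain ⟨x, hxK, hx⟩ := hKinf.exists_gt (g c)
          refine ⟨fun u => if u ≤ c then g u else x, by simp [hg0], ?_, ?_⟩
          · intro u hu
            dsimp only
            by_cases huc : u < c
            · rw [if_pos (by omega), if_pos (by omega)]
              exact hmono u huc
            · obtain rfl : u = c := by omega
              rw [if_pos le_rfl, if_neg (by omega)]
              exact hx
          · intro u hu
            dsimp only
            by_cases huc : u ≤ c
            · rw [if_pos huc]; exact hmem u huc
            · obtain rfl : u = c + 1 := by omega
              rw [if_neg (by omega)]
              exact ⟨fun _ => hxK, fun h => absurd hev h⟩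
        · obtain ⟨x, hxI, hx⟩ := hIinf.exists_gt (g c)
          refine ⟨fun u => if u ≤ c then g u else x, by simp [hg0], ?_, ?_⟩
          · intro u hu
            dsimp only
            by_cases huc : u < c
            · rw [if_pos (by omega), if_pos (by omega)]
              exact hmono u huc
            · obtain rfl : u = c := by omega
              rw [if_pos le_rfl, if_neg (by omega)]
              exact hx
          · intro u hu
            dsimp only
            by_cases huc : u ≤ c
            · rw [if_pos huc]; exact hmem u huc
            · obtain rfl : u = c + 1 := by omega
              rw [if_neg (by omega)]
              exact ⟨fun h => absurd h hev, fun _ => hxI⟩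
  obtain ⟨g, hg0, hgmono, hgmem⟩ := chain (2 * n + 2)
  have hgm : ∀ u v, u ≤ v → v ≤ 2 * n + 2 → g u ≤ g v := by
    intro u v huv hv
    induction v with
    | zero =>
        obtain rfl : u = 0 := by omega
        exact le_rfl
    | succ v ih =>
        rcases Nat.lt_or_ge u (v + 1) with h1 | h1
        · exact le_trans (ih (by omega) (by omega)) (le_of_lt (hgmono v (by omega)))
        · obtain rfl : u = v + 1 := by omega
          exact le_rfl
  obtain ⟨NI, hNII, hNIgt⟩ := hIinf.exists_gt (g (2 * n + 2))
  obtain ⟨NK, hNKK, hNKgt⟩ := hKinf.exists_gt NI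
  set X : ℕ → List ℕ := fun s => hh S s (NI - s) (topAddr (S.cfg NI).2 n) with hX
  set Y : ℕ → List ℕ := fun s => hh S s (NK - s) (topAddr (S.cfg NK).2 n) with hY
  have hmNK : m ≤ NK := hKge NK hNKK
  have hcohX : ∀ s t, s ≤ t → t ≤ NI → X s = hh S s (t - s) (X t) := by
    intro s t hst htN
    show hh S s (NI - s) _ = _
    rw [show NI - s = (t - s) + (NI - t) by omega, hh_comp,
      show s + (t - s) = t by omega]
  have hcohY : ∀ s t, s ≤ t → t ≤ NK → Y s = hh S s (t - s) (Y t) := by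
    intro s t hst htN
    show hh S s (NK - s) _ = _
    rw [show NK - s = (t - s) + (NK - t) by omega, hh_comp,
      show s + (t - s) = t by omega]
  have hXtop : ∀ i ∈ I, i ≤ NI → X i = topAddr (S.cfg i).2 n :=
    fun i hi hiN => hupI i hi NI hNII hiN
  have hYtop : ∀ k ∈ K, k ≤ NK → Y k = topAddr (S.cfg k).2 n :=
    fun k hk hkN => hupK k hk NK hNKK hkN
  have hvX : ∀ s, s ≤ NI → LeafAt (S.cfg s).2 (X s) := by
    intro s hs
    apply hh_leafAt
    rw [show s + (NI - s) = NI by omega]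
    exact topValid (step_isValid (S.ok NI))
  have hvY : ∀ s, s ≤ NK → LeafAt (S.cfg s).2 (Y s) := by
    intro s hs
    apply hh_leafAt
    rw [show s + (NK - s) = NK by omega]
    exact topValid (step_isValid (S.ok NK))
  have hlenX : ∀ s, s ≤ NI → (X s).length = n :=
    fun s hs => leafAt_len (step_isValid (S.ok s)) (hvX s hs)
  have hlenY : ∀ s, s ≤ NK → (Y s).length = n :=
    fun s hs => leafAt_len (step_isValid (S.ok s)) (hvY s hs)
  have hnomerge : ∀ s, s ≤ NI → X s ≠ Y s := by
    intro s hs heqXY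
    apply hupm
    have h1 : X 0 = Y 0 := by
      rw [hcohX 0 s (by omega) hs, heqXY, ← hcohY 0 s (by omega) (by omega)]
    have h2 : X 0 = topAddr (S.cfg 0).2 n := hXtop 0 hI0 (by omega)
    have h3 : Y 0 = hh S 0 m (hh S m (NK - m) (topAddr (S.cfg NK).2 n)) := by
      show hh S 0 (NK - 0) _ = _
      rw [show NK - 0 = m + (NK - m) by omega, hh_comp, Nat.zero_add]
    have h4 : hh S m (NK - m) (topAddr (S.cfg NK).2 n) = topAddr (S.cfg m).2 n :=
      hupK m hKm NK hNKK hmNK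
    show hh S 0 (m - 0) (topAddr (S.cfg m).2 n) = topAddr (S.cfg 0).2 n
    rw [Nat.sub_zero, ← h4, ← h3, ← h1, h2]
  have hsignI : ∀ i ∈ I, i ≤ NI → ltd (Y i) (X i) := by
    intro i hi hiN
    have hYne : Y i ≠ topAddr (S.cfg i).2 n := by
      intro hYeq
      have hupiNK : uppr S i NK := hYeq
      apply hupm
      rcases le_or_gt i m with him | hmi
      · have h5 : uppr S i m := uppr_cancel S him hmNK hupiNK (hupK m hKm NK hNKK hmNK)
        exact uppr_trans S (Nat.zero_le i) him (hupI 0 hI0 i hi (Nat.zero_le i)) h5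
      · have h5 : uppr S m i :=
          uppr_cancel S (le_of_lt hmi) (by omega) (hupK m hKm NK hNKK hmNK) hupiNK
        exact uppr_cancel S (Nat.zero_le m) (le_of_lt hmi)
          (hupI 0 hI0 i hi (Nat.zero_le i)) h5
    rw [hXtop i hi hiN]
    exact topMax (step_isValid (S.ok i)) (hvY i (by omega)) hYne
  have hsignK : ∀ k ∈ K, k ≤ NI → ltd (X k) (Y k) := by
    intro k hk hkN
    have hXne : X k ≠ topAddr (S.cfg k).2 n := by
      intro hXeq
      have hupkNI : uppr S k NI := hXeq
      apply hupm
      have h5 : uppr S 0 k :=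
        uppr_cancel S (Nat.zero_le k) hkN (hupI 0 hI0 NI hNII (Nat.zero_le NI)) hupkNI
      exact uppr_cancel S (Nat.zero_le m) (hKge k hk) h5 (hupK m hKm k hk (hKge k hk))
    rw [hYtop k hk (by omega)]
    exact topMax (step_isValid (S.ok k)) (hvX k hkN) hXne
  -- one-step evolution of the first-difference measure
  have hstep : ∀ s, s + 1 ≤ NI →
      fd (X (s + 1)) (Y (s + 1)) ≤ fd (X s) (Y s) ∧
      (fd (X s) (Y s) = fd (X (s + 1)) (Y (s + 1)) →
        (ltd (X s) (Y s) ↔ ltd (X (s + 1)) (Y (s + 1)))) := by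
    intro s hsN
    have hXs : X s = iphi S s (X (s + 1)) := by
      rw [hcohX s (s + 1) (by omega) hsN, show s + 1 - s = 1 by omega]
      rfl
    have hYs : Y s = iphi S s (Y (s + 1)) := by
      rw [hcohY s (s + 1) (by omega) (by omega), show s + 1 - s = 1 by omega]
      rfl
    have hres := iphi_pair S s (hvX (s + 1) hsN) (hvY (s + 1) (by omega))
      (hnomerge (s + 1) hsN)
      (by rw [← hXs, ← hYs]; exact hnomerge s (by omega))
    rw [hXs, hYs]
    exact ⟨hres.1, fun hab => hres.2 hab⟩
  have hFmono : ∀ a b, a ≤ b → b ≤ NI → fd (X b) (Y b) ≤ fd (X a) (Y a) := by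
    intro a b hab hbN
    induction b with
    | zero =>
        obtain rfl : a = 0 := by omega
        exact le_rfl
    | succ b ih =>
        rcases Nat.lt_or_ge a (b + 1) with h1 | h1
        · exact le_trans (hstep b hbN).1 (ih (by omega) (by omega))
        · obtain rfl : a = b + 1 := by omega
          exact le_rfl
  have hflip : ∀ b a, a ≤ b → b ≤ NI →
      ¬ (ltd (X a) (Y a) ↔ ltd (X b) (Y b)) → fd (X b) (Y b) < fd (X a) (Y a) := by
    intro b
    induction b with
    | zero =>
        intro a hab _ hne
        obtain rfl : a = 0 := by omega
        exact absurd Iff.rfl hne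
    | succ b ih =>
        intro a hab hbN hne
        rcases Nat.lt_or_ge a (b + 1) with h1 | h1
        · by_cases hsb : ltd (X a) (Y a) ↔ ltd (X b) (Y b)
          · -- the sign changes between b and b+1
            have h2 := hstep b hbN
            rcases lt_or_eq_of_le h2.1 with h3 | h3
            · exact lt_of_lt_of_le h3 (hFmono a b (by omega) (by omega))
            · exact absurd (hsb.trans (h2.2 h3.symm)) hne
          · exact lt_of_le_of_lt (hstep b hbN).1 (ih a (by omega) (by omega) hsb)
        · obtain rfl : a = b + 1 := by omega
          exact absurd Iff.rfl hne
  -- signs at the chain points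
  have hsgn : ∀ u, u ≤ 2 * n + 2 →
      (Even u → ltd (X (g u)) (Y (g u))) ∧
      (¬ Even u → ¬ ltd (X (g u)) (Y (g u))) := by
    intro u hu
    have hgN : g u ≤ NI := le_of_lt (lt_of_le_of_lt (hgm u (2 * n + 2) hu le_rfl) hNIgt)
    constructor
    · intro hev
      exact hsignK (g u) ((hgmem u hu).1 hev) hgN
    · intro hodd
      exact fun hc => ltd_asymm hc (hsignI (g u) ((hgmem u hu).2 hodd) hgN)
  -- counting
  have hcount : ∀ u, u ≤ 2 * n + 2 → fd (X (g u)) (Y (g u)) + u ≤ fd (X (g 0)) (Y (g 0)) := by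
    intro u hu
    induction u with
    | zero => omega
    | succ u ih =>
        have hlt : fd (X (g (u + 1))) (Y (g (u + 1))) < fd (X (g u)) (Y (g u)) := by
          apply hflip (g (u + 1)) (g u) (le_of_lt (hgmono u (by omega)))
            (le_of_lt (lt_of_le_of_lt (hgm (u + 1) (2 * n + 2) hu le_rfl) hNIgt))
          intro hiff
          rcases Nat.even_or_odd u with hev | hodd
          · have h1 := (hsgn u (by omega)).1 hev
            have h2 := (hsgn (u + 1) hu).2 (by simpa [Nat.even_add_one] using hev)
            exact h2 (hiff.mp h1)
          · have h1 := (hsgn u (by omega)).2 (by simpa using hodd)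
            have h2 := (hsgn (u + 1) hu).1 (by simpa [Nat.even_add_one] using hodd)
            exact h1 (hiff.mpr h2)
        have := ih (by omega)
        omega
  have hbound : fd (X (g 0)) (Y (g 0)) < n := by
    have hgN : g 0 ≤ NI := le_of_lt (lt_of_le_of_lt (hgm 0 (2 * n + 2) (by omega) le_rfl) hNIgt)
    have := fd_lt_len (hnomerge (g 0) hgN)
      ((hlenX (g 0) hgN).trans (hlenY (g 0) (by omega)).symm)
    rwa [hlenX (g 0) hgN] at this
  have := hcount (2 * n + 2) le_rfl
  omega

end Key
/-- Let `D` be an `n`-DPDA whose input alphabet contains a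
distinguished symbol `⋆`, and let `R` be a run of `D` between two milestone
configurations.  If `R` reads only `⋆` symbols, then `R` is 0-upper. -/
theorem statement17 {n : ℕ} (hn : 1 ≤ n) {A Γ : Type} [Finite A] [Finite Γ]
    {D : DPDA n A Γ} (star : A) (R : Run D)
    (h0 : Milestone star (R.cfg 0)) (h1 : Milestone star (R.cfg R.len))
    (hw : ∀ i < R.len, OnlyStar star (R.lab i)) :
    R.IsUpper 0 := by
  classical
  obtain ⟨S, hS0, hSstar, I, hIinf, hI0, hIup⟩ := h0
  obtain ⟨T, hT0, hTstar, J, hJinf, hJ0, hJup⟩ := h1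
  -- by determinism, `R` is an initial segment of `S`
  have hpre : ∀ t, t ≤ R.len → R.cfg t = S.cfg t := by
    intro t ht
    induction t with
    | zero => exact hS0.symm
    | succ t ih =>
        have hh1 := R.ok t (by omega)
        have hh2 := S.ok t
        rw [ih (by omega)] at hh1
        exact step_det hh1 hh2 (hw t (by omega)) (hSstar t)
  -- by determinism, `T` is the suffix of `S` starting at `R.len`
  have hshift : ∀ j, T.cfg j = S.cfg (R.len + j) := by
    intro j
    induction j with
    | zero =>
        rw [hT0]
        exact hpre R.len le_rfl
    | succ j ih =>
        have hh1 := T.ok j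
        have hh2 := S.ok (R.len + j)
        rw [ih] at hh1
        have h3 := step_det hh1 hh2 (hTstar j) (hSstar (R.len + j))
        rw [show R.len + (j + 1) = R.len + j + 1 by omega]
        exact h3
  set K : Set ℕ := (fun j => R.len + j) '' J with hK
  have hKinf : K.Infinite := hJinf.image (fun a _ b _ h => by omega)
  have hKm : R.len ∈ K := ⟨0, hJ0, by simp⟩
  have hKge : ∀ k ∈ K, R.len ≤ k := by
    rintro k ⟨j, hj, rfl⟩
    show R.len ≤ R.len + j
    omega
  have hupI : ∀ i ∈ I, ∀ j ∈ I, i ≤ j → uppr S i j := fun i hi j hj hij =>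
    (isUpper_sub S hij).mp (hIup i hi j hj hij)
  have hupK : ∀ k ∈ K, ∀ k' ∈ K, k ≤ k' → uppr S k k' := by
    rintro k ⟨j, hj, rfl⟩ k' ⟨j', hj', rfl⟩ hkk'
    dsimp only at hkk' ⊢
    have hjj' : j ≤ j' := by omega
    have hh1 := hJup j hj j' hj' hjj'
    have hh2 : (S.sub (R.len + j) (R.len + j')).IsUpper 0 := by
      refine (isUpper_congr ?_ ?_).mp hh1
      · show j' - j = R.len + j' - (R.len + j)
        omega
      · intro t _
        show T.cfg (j + t) = S.cfg (R.len + j + t)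
        rw [hshift (j + t)]
        congr 1
        omega
    exact (isUpper_sub S (by omega)).mp hh2
  have hkey : uppr S 0 R.len := key hn S hIinf hKinf hI0 hKm hKge hupI hupK
  have hsub : (S.sub 0 R.len).IsUpper 0 := (isUpper_sub S (Nat.zero_le _)).mpr hkey
  refine (isUpper_congr ?_ ?_).mp hsub
  · show R.len - 0 = R.len
    omega
  · intro t ht
    show S.cfg (0 + t) = R.cfg t
    rw [Nat.zero_add]
    exact (hpre t (by simpa [InfRun.sub] using ht)).symm

end HOPDA
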